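/- Suppose f ∈ L^1 of a probability space satisfies ∫_X f dμ ≠ 0, and T is an ergodic invertible measure-preserving transformation. Then there is no measurable function g with f = g - g∘T almost everywhere. (Anosov's theorem.) -/

import Mathlib

open MeasureTheory Filter Topology Set
open scoped ENNReal NNReal

theorem stmt4 {X : Type*} [MeasurableSpace X] [StandardBorelSpace X]
    (μ : Measure X) [IsProbabilityMeasure μ]
    (T : X → X) (hT : Ergodic T μ)
    (hTinv : ∃ S : X → X, Measurable S ∧ MeasurePreserving S μ μ ∧
      Function.LeftInverse S T ∧ Function.RightInverse S T)
    (f : X → ℝ) (hf : Integrable f μ) (hmean : ∫ x, f x ∂μ ≠ 0) :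
    ¬ ∃ g : X → ℝ, Measurable g ∧ ∀ᵐ x ∂μ, f x = g x - g (T x) := by
  rintro ⟨g, hgm, hfg⟩
  obtain ⟨S, hSm, hSmp, hST, hTS⟩ := hTinv
  have hTmp : MeasurePreserving T μ μ := hT.toMeasurePreserving
  set c : ℝ := ∫ x, f x ∂μ with hc
  set aseq : ℕ → X → ℝ :=
    fun n x => (n : ℝ)⁻¹ • ∑ i ∈ Finset.range n, f (T^[i] x) with haseq
  set hseq : ℕ → X → ℝ :=
    fun n x => (n : ℝ)⁻¹ • (g x - g (T^[n] x)) with hhseq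
  -- integrability of the averages
  have hfi : ∀ i : ℕ, Integrable (fun x => f (T^[i] x)) μ := fun i =>
    ((hTmp.iterate i).integrable_comp hf.aestronglyMeasurable).2 hf
  have haseq_int : ∀ n, Integrable (aseq n) μ := by
    intro n
    simp only [haseq, smul_eq_mul]
    exact (integrable_finset_sum _ fun i _ => hfi i).const_mul _
  -- a.e. equality of the telescoping sum
  have hae : ∀ i : ℕ, ∀ᵐ x ∂μ, f (T^[i] x) = g (T^[i] x) - g (T^[i + 1] x) := by
    intro i
    filter_upwards [(hTmp.iterate i).quasiMeasurePreserving.ae hfg] with x hx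
    rw [Function.iterate_succ_apply']
    exact hx
  have haehs : ∀ n, aseq n =ᵐ[μ] hseq n := by
    intro n
    filter_upwards [ae_all_iff.2 hae] with x hx
    have hsum : ∑ i ∈ Finset.range n, f (T^[i] x) = g x - g (T^[n] x) := by
      calc ∑ i ∈ Finset.range n, f (T^[i] x)
          = ∑ i ∈ Finset.range n, (g (T^[i] x) - g (T^[i + 1] x)) :=
            Finset.sum_congr rfl fun i _ => hx i
        _ = g (T^[0] x) - g (T^[n] x) := Finset.sum_range_sub' (fun i => g (T^[i] x)) n
        _ = g x - g (T^[n] x) := by rw [Function.iterate_zero_apply]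
    simp only [haseq, hhseq, hsum]
  -- the tail of |g| has small measure
  have hBmeas : ∀ M : ℝ, MeasurableSet {x | M ≤ |g x|} :=
    fun M => measurableSet_le measurable_const hgm.abs
  have htail : Tendsto (fun M : ℝ => μ {x | M ≤ |g x|}) atTop (𝓝 0) := by
    have h0 : (⋂ M : ℝ, {x | M ≤ |g x|}) = ∅ := by
      ext x
      simp only [mem_iInter, mem_setOf_eq, mem_empty_iff_false, iff_false, not_forall, not_le]
      exact ⟨|g x| + 1, by linarith⟩
    have hmono : Antitone fun M : ℝ => {x | M ≤ |g x|} :=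
      fun a b hab x hx => le_trans hab hx
    have := tendsto_measure_iInter_atTop (μ := μ) (s := fun M : ℝ => {x | M ≤ |g x|})
      (fun M => (hBmeas M).nullMeasurableSet) hmono ⟨0, measure_ne_top μ _⟩
    rwa [h0, measure_empty] at this
  -- convergence in measure of hseq to 0
  have htim : TendstoInMeasure μ hseq atTop (fun _ => (0 : ℝ)) := by
    refine tendstoInMeasure_of_ne_top fun ε' hε' hε'top => ?_
    have hset : ∀ n, {x | ε' ≤ edist (hseq n x) 0} = {x | ε'.toReal ≤ dist (hseq n x) 0} :=
      fun n => by
        ext x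
        simp only [mem_setOf_eq, edist_dist]
        exact ENNReal.le_ofReal_iff_toReal_le hε'top dist_nonneg
    show Tendsto (fun n => μ {x | ε' ≤ edist (hseq n x) 0}) atTop (𝓝 0)
    simp only [hset]
    have hε : (0 : ℝ) < ε'.toReal := ENNReal.toReal_pos hε'.ne' hε'top
    set ε := ε'.toReal with hεdef
    have hbound : ∀ n : ℕ,
        μ {x | ε ≤ dist (hseq n x) 0} ≤ 2 * μ {x | ((n : ℝ) * ε / 2) ≤ |g x|} := by
      intro n
      have hsub : {x | ε ≤ dist (hseq n x) 0} ⊆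
          {x | ((n : ℝ) * ε / 2) ≤ |g x|} ∪ T^[n] ⁻¹' {x | ((n : ℝ) * ε / 2) ≤ |g x|} := by
        intro x hx
        simp only [mem_setOf_eq, Real.dist_eq, sub_zero, hhseq, smul_eq_mul] at hx
        by_contra hcon
        simp only [mem_union, mem_preimage, mem_setOf_eq, not_or, not_le] at hcon
        obtain ⟨h1, h2⟩ := hcon
        rcases Nat.eq_zero_or_pos n with rfl | hn
        · simp only [Nat.cast_zero, zero_mul, zero_div] at h1
          exact absurd h1 (not_lt.2 (abs_nonneg _))
        · have hnR : (0 : ℝ) < n := by exact_mod_cast hn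
          have habs : |g x - g (T^[n] x)| ≤ |g x| + |g (T^[n] x)| := abs_sub _ _
          have hx' : ε ≤ (n : ℝ)⁻¹ * |g x - g (T^[n] x)| := by
            calc ε ≤ |(n : ℝ)⁻¹ * (g x - g (T^[n] x))| := hx
              _ = (n : ℝ)⁻¹ * |g x - g (T^[n] x)| := by
                  rw [abs_mul, abs_of_pos (inv_pos.2 hnR)]
          have h3 : (n : ℝ) * ε ≤ |g x - g (T^[n] x)| := by
            have := mul_le_mul_of_nonneg_left hx' hnR.le
            rwa [← mul_assoc, mul_inv_cancel₀ hnR.ne', one_mul] at this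
          linarith
      calc μ {x | ε ≤ dist (hseq n x) 0}
          ≤ μ ({x | ((n : ℝ) * ε / 2) ≤ |g x|} ∪
              T^[n] ⁻¹' {x | ((n : ℝ) * ε / 2) ≤ |g x|}) := measure_mono hsub
        _ ≤ μ {x | ((n : ℝ) * ε / 2) ≤ |g x|} +
              μ (T^[n] ⁻¹' {x | ((n : ℝ) * ε / 2) ≤ |g x|}) := measure_union_le _ _
        _ = 2 * μ {x | ((n : ℝ) * ε / 2) ≤ |g x|} := by
            rw [(hTmp.iterate n).measure_preimage (hBmeas _).nullMeasurableSet, two_mul]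
    have harg : Tendsto (fun n : ℕ => (n : ℝ) * ε / 2) atTop atTop :=
      (tendsto_natCast_atTop_atTop.atTop_mul_const hε).atTop_div_const two_pos
    have h2 : Tendsto (fun n : ℕ => 2 * μ {x | ((n : ℝ) * ε / 2) ≤ |g x|}) atTop (𝓝 0) := by
      have := ENNReal.Tendsto.const_mul (htail.comp harg) (Or.inr (ENNReal.ofNat_ne_top (n := 2)))
      simpa using this
    exact tendsto_of_tendsto_of_tendsto_of_le_of_le tendsto_const_nhds h2
      (fun n => zero_le) hbound
  -- uniform integrability of the averages
  have hUI : UnifIntegrable aseq 1 μ := by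
    intro ε hε
    obtain ⟨δ, hδ, hδle⟩ :=
      (memLp_one_iff_integrable.2 hf).eLpNorm_indicator_le le_rfl ENNReal.one_ne_top hε
    refine ⟨δ, hδ, fun n s hs hμs => ?_⟩
    have hkey : ∀ i : ℕ, eLpNorm (s.indicator fun x => f (T^[i] x)) 1 μ ≤ ENNReal.ofReal ε := by
      intro i
      set A : Set X := S^[i] ⁻¹' s with hA
      have hAmeas : MeasurableSet A := (hSm.iterate i) hs
      have hμA : μ A ≤ ENNReal.ofReal δ := by
        rw [hA, (hSmp.iterate i).measure_preimage hs.nullMeasurableSet]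
        exact hμs
      have hid : s.indicator (fun x => f (T^[i] x)) = A.indicator f ∘ T^[i] := by
        funext x
        simp only [Function.comp_apply]
        have hmem : T^[i] x ∈ A ↔ x ∈ s := by
          simp [hA, Set.mem_preimage, (hST.iterate i) x]
        by_cases hx : x ∈ s
        · rw [Set.indicator_of_mem hx, Set.indicator_of_mem (hmem.2 hx)]
        · rw [Set.indicator_of_notMem hx, Set.indicator_of_notMem (fun h => hx (hmem.1 h))]
      rw [hid, eLpNorm_comp_measurePreserving
        (hf.aestronglyMeasurable.indicator hAmeas) (hTmp.iterate i)]
      exact hδle A hAmeas hμA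
    rcases Nat.eq_zero_or_pos n with rfl | hn
    · simp only [haseq, Nat.cast_zero, Finset.range_zero, Finset.sum_empty, smul_zero]
      simp
    have hnR : (0 : ℝ) < n := by exact_mod_cast hn
    have hind : s.indicator (fun x => ∑ i ∈ Finset.range n, f (T^[i] x))
        = ∑ i ∈ Finset.range n, s.indicator fun x => f (T^[i] x) := by
      funext x
      rcases em (x ∈ s) with hx | hx <;>
        simp [Set.indicator_of_mem, Set.indicator_of_notMem, hx, Finset.sum_apply]
    have hcoe : (‖(n : ℝ)⁻¹‖₊ : ℝ≥0∞) = ((n : ℝ≥0∞))⁻¹ := by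
      rw [nnnorm_inv, ENNReal.coe_inv (by simpa using hnR.ne')]
      norm_cast
    calc eLpNorm (s.indicator (aseq n)) 1 μ
        = (‖(n : ℝ)⁻¹‖₊ : ℝ≥0∞) *
            eLpNorm (s.indicator fun x => ∑ i ∈ Finset.range n, f (T^[i] x)) 1 μ := by
          rw [← enorm_eq_nnnorm, ← eLpNorm_const_smul]
          congr 1
          funext x
          simp only [haseq, Pi.smul_apply]
          rcases em (x ∈ s) with hx | hx <;>
            simp [Set.indicator_of_mem, Set.indicator_of_notMem, hx]
      _ ≤ (‖(n : ℝ)⁻¹‖₊ : ℝ≥0∞) *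
            ∑ i ∈ Finset.range n, eLpNorm (s.indicator fun x => f (T^[i] x)) 1 μ := by
          rw [hind]
          exact mul_le_mul_right (eLpNorm_sum_le
            (fun i _ => (hfi i).aestronglyMeasurable.indicator hs) le_rfl) _
      _ ≤ (‖(n : ℝ)⁻¹‖₊ : ℝ≥0∞) * ((n : ℝ≥0∞) * ENNReal.ofReal ε) := by
          refine mul_le_mul_right ?_ _
          calc ∑ i ∈ Finset.range n, eLpNorm (s.indicator fun x => f (T^[i] x)) 1 μ
              ≤ ∑ _i ∈ Finset.range n, ENNReal.ofReal ε :=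
                Finset.sum_le_sum fun i _ => hkey i
            _ = (n : ℝ≥0∞) * ENNReal.ofReal ε := by
                rw [Finset.sum_const, Finset.card_range, nsmul_eq_mul]
      _ = ENNReal.ofReal ε := by
          rw [hcoe, ← mul_assoc,
            ENNReal.inv_mul_cancel (by exact_mod_cast hn.ne') (by simp), one_mul]
  -- Vitali convergence theorem
  have htim' : TendstoInMeasure μ aseq atTop (fun _ => (0 : ℝ)) :=
    htim.congr (fun n => (haehs n).symm) (Filter.EventuallyEq.refl _ _)
  have hLp :=
    tendsto_Lp_finite_of_tendstoInMeasure (μ := μ) le_rfl ENNReal.one_ne_top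
      (fun n => (haseq_int n).aestronglyMeasurable) (memLp_const (0 : ℝ)) hUI htim'
  have hInt0 : Tendsto (fun n => ∫ x, aseq n x ∂μ) atTop (𝓝 0) := by
    have := tendsto_integral_of_L1' (μ := μ) (fun _ => (0 : ℝ)) (integrable_const 0).aestronglyMeasurable
      (Eventually.of_forall haseq_int) hLp
    simpa using this
  -- the integral of each average is c
  have hicomp : ∀ i : ℕ, ∫ x, f (T^[i] x) ∂μ = c := by
    intro i
    have hm := (hTmp.iterate i).map_eq
    rw [hc]
    conv_rhs => rw [← hm]
    rw [integral_map (hTmp.iterate i).measurable.aemeasurable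
      (by rw [hm]; exact hf.aestronglyMeasurable)]
  have hint : ∀ n : ℕ, 1 ≤ n → ∫ x, aseq n x ∂μ = c := by
    intro n hn
    have hnR : ((n : ℝ)) ≠ 0 := by exact_mod_cast Nat.one_le_iff_ne_zero.mp hn
    simp only [haseq]
    rw [integral_smul, integral_finset_sum _ fun i _ => hfi i]
    simp only [hicomp]
    rw [Finset.sum_const, Finset.card_range, nsmul_eq_mul, smul_eq_mul, ← mul_assoc,
      inv_mul_cancel₀ hnR, one_mul]
  have hfin : Tendsto (fun _ : ℕ => c) atTop (𝓝 0) := by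
    refine hInt0.congr' ?_
    filter_upwards [eventually_ge_atTop 1] with n hn using hint n hn
  exact hmean (tendsto_nhds_unique tendsto_const_nhds hfin)
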